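/- Let γ > 1, κ ∈ ℝ, let u₀ ∈ ℝ^d, B₀ ∈ ℝ^d, p₀ ∈ ℝ be constants, and let ρ : ℝ^d × (0,∞) → ℝ be positive, twice continuously differentiable in space and continuously differentiable in time, satisfying the unregularized mass equation ∂_t ρ + ∇·(ρ u₀) = 0. Define E := p₀/(γ−1) + ρ|u₀|²/2 + |B₀|²/2, u := u₀, p := p₀, 𝒯 := B₀ ⊗ B₀ − (|B₀|²/2)I, and temperature T := p₀/ρ. Then the residual of the resistive-MHD energy equation satisfies, at every point, ∂_t E + ∇·(u(E+p)) − ∇·(u·𝒯) − ∇·(κ∇T) = ∇·(κ p₀ ρ⁻² ∇ρ). In particular, the resistive-MHD energy equation with constant u₀, p₀, B₀ holds for all such ρ only if κ = 0, so the resistive MHD flux with nonzero thermal diffusivity is not compatible with contact waves. -/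

import Mathlib

open scoped BigOperators

/-- Spatial partial derivative `∂_i f (x)` of a scalar field on `ℝ^d`. -/
noncomputable def spd {d : ℕ} (f : (Fin d → ℝ) → ℝ) (i : Fin d) (x : Fin d → ℝ) : ℝ :=
  fderiv ℝ f x (Pi.single i 1)

/-- The Maxwell stress tensor `𝒯 = B ⊗ B − (|B|²/2) I` built from a vector `B ∈ ℝ^d`. -/
noncomputable def maxwellT {d : ℕ} (B : Fin d → ℝ) (i j : Fin d) : ℝ :=
  B i * B j - (if i = j then (∑ k, (B k) ^ 2) / 2 else 0)

/-- for a contact wave (constant `u₀, p₀, B₀`, density solving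
`∂ₜρ + ∇·(ρu₀) = 0`), with `E := p₀/(γ−1) + ρ|u₀|²/2 + |B₀|²/2` and temperature
`T := p₀/ρ`, the residual of the resistive-MHD energy equation satisfies
`∂ₜE + ∇·(u(E+p)) − ∇·(u·𝒯) − ∇·(κ∇T) = ∇·(κ p₀ ρ⁻² ∇ρ)` at every point; hence the
resistive flux with `κ ≠ 0` is not compatible with contact waves. -/
theorem stmt_17 {d : ℕ} (hd : 1 ≤ d) (γ κ : ℝ) (hγ : 1 < γ)
    (u₀ B₀ : Fin d → ℝ) (p₀ : ℝ)
    (ρ : (Fin d → ℝ) → ℝ → ℝ)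
    (hρpos : ∀ x t, 0 < ρ x t)
    (hρx : ∀ t, ContDiff ℝ 2 fun x => ρ x t) (hρt : ∀ x, ContDiff ℝ 1 fun t => ρ x t)
    (hmass : ∀ (x : Fin d → ℝ) (t : ℝ), 0 < t →
      deriv (fun τ => ρ x τ) t + (∑ j, spd (fun y => ρ y t * u₀ j) j x) = 0) :
    ∀ (x : Fin d → ℝ) (t : ℝ), 0 < t →
      deriv (fun τ => p₀ / (γ - 1) + ρ x τ * (∑ k, (u₀ k) ^ 2) / 2
          + (∑ k, (B₀ k) ^ 2) / 2) t
        + (∑ j, spd (fun y => u₀ j * ((p₀ / (γ - 1) + ρ y t * (∑ k, (u₀ k) ^ 2) / 2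
              + (∑ k, (B₀ k) ^ 2) / 2) + p₀)) j x)
        - (∑ j, spd (fun y => ∑ k, u₀ k * maxwellT B₀ k j) j x)
        - (∑ j, spd (fun y => κ * spd (fun z => p₀ / ρ z t) j y) j x)
      = ∑ j, spd (fun y => κ * p₀ * (ρ y t)⁻¹ ^ 2 * spd (fun z => ρ z t) j y) j x := by
  intro x t ht
  set S : ℝ := ∑ k, (u₀ k) ^ 2 with hS
  set SB : ℝ := ∑ k, (B₀ k) ^ 2 with hSB
  have hρd : Differentiable ℝ (fun y => ρ y t) := (hρx t).differentiable two_ne_zero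
  have hdt : Differentiable ℝ (fun τ => ρ x τ) := (hρt x).differentiable one_ne_zero
  -- time derivative of E
  have hA : deriv (fun τ => p₀ / (γ - 1) + ρ x τ * S / 2 + SB / 2) t
      = S / 2 * deriv (fun τ => ρ x τ) t := by
    have he : (fun τ => p₀ / (γ - 1) + ρ x τ * S / 2 + SB / 2)
        = fun τ => (S / 2) * ρ x τ + (p₀ / (γ - 1) + SB / 2) := by
      funext τ; ring
    rw [he, deriv_add_const, deriv_const_mul _ (hdt t)]
  -- convective term
  have hB : ∀ j, spd (fun y => u₀ j * ((p₀ / (γ - 1) + ρ y t * S / 2 + SB / 2) + p₀)) j x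
      = (u₀ j * (S / 2)) * spd (fun y => ρ y t) j x := by
    intro j
    have he : (fun y => u₀ j * ((p₀ / (γ - 1) + ρ y t * S / 2 + SB / 2) + p₀))
        = fun y => (u₀ j * (S / 2)) * ρ y t + u₀ j * (p₀ / (γ - 1) + SB / 2 + p₀) := by
      funext y; ring
    rw [he]
    unfold spd
    rw [fderiv_add_const, fderiv_const_mul (hρd x)]
    simp
  -- Maxwell term is constant in space
  have hC : ∀ j : Fin d, spd (fun y : Fin d → ℝ => ∑ k, u₀ k * maxwellT B₀ k j) j x = 0 := by
    intro j
    unfold spd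
    rw [fderiv_fun_const]
    simp
  -- mass equation rewritten
  have hmass' : deriv (fun τ => ρ x τ) t + ∑ j, u₀ j * spd (fun y => ρ y t) j x = 0 := by
    have h0 := hmass x t ht
    have he : ∀ j : Fin d, spd (fun y => ρ y t * u₀ j) j x
        = u₀ j * spd (fun y => ρ y t) j x := by
      intro j
      have he2 : (fun y => ρ y t * u₀ j) = fun y => u₀ j * ρ y t := by funext y; ring
      rw [he2]
      unfold spd
      rw [fderiv_const_mul (hρd x)]
      simp
    rwa [Finset.sum_congr rfl (fun j _ => he j)] at h0
  -- heat flux term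
  have hD : ∀ j : Fin d, spd (fun y => κ * spd (fun z => p₀ / ρ z t) j y) j x
      = - spd (fun y => κ * p₀ * (ρ y t)⁻¹ ^ 2 * spd (fun z => ρ z t) j y) j x := by
    intro j
    have he : (fun y => κ * spd (fun z => p₀ / ρ z t) j y)
        = fun y => -(κ * p₀ * (ρ y t)⁻¹ ^ 2 * spd (fun z => ρ z t) j y) := by
      funext y
      have h1 := (hρd y).hasFDerivAt
      have h2 := (hasFDerivAt_inv (hρpos y t).ne').comp y h1
      simp only [Function.comp_def] at h2
      have h3 := h2.const_mul p₀
      have h4 : (fun z => p₀ / ρ z t) = fun z => p₀ * (ρ z t)⁻¹ := by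
        funext z; rw [div_eq_mul_inv]
      have h5 : spd (fun z => p₀ / ρ z t) j y
          = p₀ * (-(ρ y t ^ 2)⁻¹ * fderiv ℝ (fun z => ρ z t) y (Pi.single j 1)) := by
        unfold spd
        rw [h4, h3.fderiv]
        simp only [ContinuousLinearMap.coe_smul', Pi.smul_apply,
          ContinuousLinearMap.coe_comp', Function.comp_apply,
          ContinuousLinearMap.smulRight_apply, ContinuousLinearMap.one_apply, smul_eq_mul,
          ContinuousLinearMap.toSpanSingleton_apply]
        ring
      have hne : ρ y t ≠ 0 := (hρpos y t).ne'
      unfold spd at h5 ⊢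
      rw [h5]
      field_simp
    rw [he]
    unfold spd
    rw [fderiv_fun_neg]
    simp
  rw [hA, Finset.sum_congr rfl (fun j _ => hB j), Finset.sum_congr rfl (fun j _ => hC j),
    Finset.sum_congr rfl (fun j _ => hD j), Finset.sum_const_zero, Finset.sum_neg_distrib]
  have hsum : (∑ j, (u₀ j * (S / 2)) * spd (fun y => ρ y t) j x)
      = (S / 2) * ∑ j, u₀ j * spd (fun y => ρ y t) j x := by
    rw [Finset.mul_sum]
    exact Finset.sum_congr rfl fun j _ => by ring
  rw [hsum]
  have hm2 : (∑ j, u₀ j * spd (fun y => ρ y t) j x) = - deriv (fun τ => ρ x τ) t := by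
    linarith [hmass']
  rw [hm2]
  ring
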